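/- For any real numbers σ and ε with 0 < ε ≤ σ/√2 and σ ≤ 1/2, there exist two Bernoulli-type distributions P and Q on {0, 2σ} such that: (a) the mean of P equals σ − ε and the mean of Q equals σ; (b) the variances of both P and Q are at most σ²; and (c) (ln 2) · KL(Q, P) ≤ ε²/σ², where KL denotes the Kullback–Leibler divergence in bits. -/

import Mathlib

/-- For any reals σ, ε with 0 < ε ≤ σ/√2 and σ ≤ 1/2, there exist
Bernoulli-type distributions P, Q on {0, 2σ} (given by their probabilities of the
value 0) such that P has mean σ − ε, Q has mean σ, both variances are at most σ²,
and (ln 2)·KL(Q,P) ≤ ε²/σ², where KL is in bits. -/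
theorem stmt_0 (σ ε : ℝ) (hε : 0 < ε) (hεσ : ε ≤ σ / Real.sqrt 2) (hσ : σ ≤ 1 / 2) :
    ∃ p q : ℝ,  -- p = P({0}), q = Q({0})
      0 ≤ p ∧ p ≤ 1 ∧ 0 ≤ q ∧ q ≤ 1 ∧
      -- (a) means
      (1 - p) * (2 * σ) = σ - ε ∧
      (1 - q) * (2 * σ) = σ ∧
      -- (b) variances at most σ²
      (1 - p) * (2 * σ) ^ 2 - ((1 - p) * (2 * σ)) ^ 2 ≤ σ ^ 2 ∧
      (1 - q) * (2 * σ) ^ 2 - ((1 - q) * (2 * σ)) ^ 2 ≤ σ ^ 2 ∧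
      -- (c) (ln 2) · KL(Q,P) in bits is at most ε²/σ²
      Real.log 2 * (q * Real.logb 2 (q / p) + (1 - q) * Real.logb 2 ((1 - q) / (1 - p)))
        ≤ ε ^ 2 / σ ^ 2 := by
  have hs2 : (1:ℝ) < Real.sqrt 2 := by
    nlinarith [Real.sq_sqrt (show (0:ℝ) ≤ 2 by norm_num), Real.sqrt_nonneg 2]
  have hσ0 : 0 < σ := by
    by_contra h
    push_neg at h
    have : σ / Real.sqrt 2 ≤ 0 := div_nonpos_of_nonpos_of_nonneg h (by positivity)
    linarith
  have hεlt : ε < σ := lt_of_le_of_lt hεσ (by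
    rw [div_lt_iff₀ (by linarith)]
    nlinarith)
  have hε2 : ε ^ 2 ≤ σ ^ 2 / 2 := by
    have h2 : Real.sqrt 2 ^ 2 = 2 := Real.sq_sqrt (by norm_num)
    have : ε ^ 2 ≤ (σ / Real.sqrt 2) ^ 2 := by
      apply pow_le_pow_left₀ hε.le hεσ
    rw [div_pow, h2] at this
    linarith
  refine ⟨(σ + ε) / (2 * σ), 1 / 2, by positivity, ?_, by norm_num, by norm_num,
    by field_simp; ring, by field_simp; ring, ?_, ?_, ?_⟩
  · rw [div_le_one (by linarith)]; linarith
  · have h1 : (1 - (σ + ε) / (2 * σ)) * (2 * σ) = σ - ε := by field_simp; ring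
    rw [h1]; nlinarith
  · have h1 : (1 - (1:ℝ)/2) * (2 * σ) = σ := by ring
    rw [h1]; nlinarith
  · have hσε1 : (0:ℝ) < σ + ε := by linarith
    have hσε2 : (0:ℝ) < σ - ε := by linarith
    have hL : Real.log 2 ≠ 0 := (Real.log_pos (by norm_num)).ne'
    have harg1 : (1:ℝ)/2 / ((σ + ε) / (2 * σ)) = σ / (σ + ε) := by
      field_simp <;> ring
    have harg2 : (1 - (1:ℝ)/2) / (1 - (σ + ε) / (2 * σ)) = σ / (σ - ε) := by
      rw [show (1 - (σ + ε) / (2 * σ)) = (σ - ε) / (2 * σ) by field_simp <;> ring]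
      field_simp <;> ring
    rw [harg1, harg2]
    simp only [Real.logb]
    have hkey : Real.log 2 * (1/2 * (Real.log (σ/(σ+ε)) / Real.log 2)
        + (1 - 1/2) * (Real.log (σ/(σ-ε)) / Real.log 2))
        = 1/2 * (Real.log (σ/(σ+ε)) + Real.log (σ/(σ-ε))) := by
      field_simp; ring
    rw [hkey]
    have hA : (σ/(σ+ε)) ≠ 0 := ne_of_gt (div_pos hσ0 hσε1)
    have hB : (σ/(σ-ε)) ≠ 0 := ne_of_gt (div_pos hσ0 hσε2)
    rw [show Real.log (σ/(σ+ε)) + Real.log (σ/(σ-ε))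
        = Real.log (σ/(σ+ε) * (σ/(σ-ε))) from (Real.log_mul hA hB).symm]
    set t := ε ^ 2 / σ ^ 2 with ht
    have ht0 : 0 < t := div_pos (pow_pos hε 2) (pow_pos hσ0 2)
    have ht12 : t ≤ 1/2 := by
      rw [ht, div_le_div_iff₀ (by positivity) (by norm_num)]
      linarith
    have h1t : 1 - t = (σ - ε) * (σ + ε) / σ ^ 2 := by
      rw [ht]; field_simp <;> ring
    have hAB : σ/(σ+ε) * (σ/(σ-ε)) = (1 - t)⁻¹ := by
      rw [h1t, div_mul_div_comm, inv_div,
        div_eq_div_iff (by positivity) (by positivity)]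
      ring
    rw [hAB, Real.log_inv]
    have hlog : Real.log (1 - t) ≥ -(2 * t) := by
      have h1 : Real.log ((1-t)⁻¹) ≤ (1-t)⁻¹ - 1 :=
        Real.log_le_sub_one_of_pos (inv_pos.mpr (by linarith))
      rw [Real.log_inv] at h1
      have h2 : (1-t)⁻¹ - 1 ≤ 2 * t := by
        rw [inv_eq_one_div, div_sub' (by linarith : (1:ℝ) - t ≠ 0),
          div_le_iff₀ (by linarith : (0:ℝ) < 1 - t)]
        nlinarith
      linarith
    linarith
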